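/- For all positive reals x, y and all positive reals α, β, one has (α + β)²(y^α - x^α)(y^β - x^β) ≥ 4αβ(y^{(α+β)/2} - x^{(α+β)/2})². -/

import Mathlib

open Real

/-- Key scaling lemma: `sinh (d*v) ≤ d * sinh v` for `0 ≤ d ≤ 1`, `0 ≤ v`. -/
lemma sinh_mul_le (d : ℝ) (hd0 : 0 ≤ d) (hd1 : d ≤ 1) :
    ∀ v : ℝ, 0 ≤ v → sinh (d * v) ≤ d * sinh v := by
  have hmono : MonotoneOn (fun v => d * sinh v - sinh (d * v)) (Set.Ici 0) := by
    apply monotoneOn_of_deriv_nonneg (convex_Ici 0)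
    · fun_prop
    · apply Differentiable.differentiableOn; fun_prop
    · intro v hv
      rw [interior_Ici] at hv
      have hv' : 0 < v := hv
      have h1 : HasDerivAt (fun w : ℝ => sinh (d * w)) (cosh (d * v) * d) v := by
        have h := (Real.hasDerivAt_sinh (d * v)).comp v ((hasDerivAt_id v).const_mul d)
        simp only [mul_one] at h; exact h
      have h2 : HasDerivAt (fun w : ℝ => d * sinh w - sinh (d * w))
          (d * cosh v - cosh (d * v) * d) v :=
        ((Real.hasDerivAt_sinh v).const_mul d).sub h1
      rw [h2.deriv]
      have hc : cosh (d * v) ≤ cosh v := by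
        rw [Real.cosh_le_cosh, abs_of_nonneg (mul_nonneg hd0 hv'.le), abs_of_nonneg hv'.le]
        nlinarith
      nlinarith [Real.cosh_pos v]
  intro v hv
  have := hmono (Set.self_mem_Ici) hv hv
  simp only [mul_zero, Real.sinh_zero, sub_zero, mul_comm] at this
  nlinarith [this]

lemma sinh_prod_identity (P Q : ℝ) :
    sinh (P + Q) * sinh (P - Q) = sinh P ^ 2 - sinh Q ^ 2 := by
  rw [Real.sinh_add, Real.sinh_sub]
  nlinarith [Real.cosh_sq P, Real.cosh_sq Q]

/-- Core inequality for sinh, with `b ≤ a`. -/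
lemma core_aux (a b u : ℝ) (ha : 0 < b) (hb : b ≤ a) (hu : 0 ≤ u) :
    4 * a * b * sinh ((a + b) / 2 * u) ^ 2 ≤ (a + b) ^ 2 * (sinh (a * u) * sinh (b * u)) := by
  have hab : 0 < a + b := by linarith
  set S := sinh ((a + b) / 2 * u) with hS
  set T := sinh ((a - b) / 2 * u) with hT
  have hid : sinh (a * u) * sinh (b * u) = S ^ 2 - T ^ 2 := by
    have := sinh_prod_identity ((a + b) / 2 * u) ((a - b) / 2 * u)
    rw [← hS, ← hT] at this
    rw [show a * u = (a + b) / 2 * u + (a - b) / 2 * u by ring,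
      show b * u = (a + b) / 2 * u - (a - b) / 2 * u by ring, this]
  have hd0 : 0 ≤ (a - b) / (a + b) := div_nonneg (by linarith) hab.le
  have hd1 : (a - b) / (a + b) ≤ 1 := by
    rw [div_le_one hab]; linarith
  have hsc := sinh_mul_le ((a - b) / (a + b)) hd0 hd1 ((a + b) / 2 * u)
    (mul_nonneg (by linarith) hu)
  have harg : (a - b) / (a + b) * ((a + b) / 2 * u) = (a - b) / 2 * u := by
    field_simp
  rw [harg] at hsc
  have hT2 : T ^ 2 ≤ ((a - b) / (a + b)) ^ 2 * S ^ 2 := by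
    have hTn : 0 ≤ T := by
      rw [hT, Real.sinh_nonneg_iff]
      exact mul_nonneg (by linarith) hu
    nlinarith
  have hTe : (a + b) ^ 2 * T ^ 2 ≤ (a - b) ^ 2 * S ^ 2 := by
    have h2 := mul_le_mul_of_nonneg_left hT2 (le_of_lt (by positivity : (0:ℝ) < (a + b) ^ 2))
    have he : (a + b) ^ 2 * (((a - b) / (a + b)) ^ 2 * S ^ 2) = (a - b) ^ 2 * S ^ 2 := by
      field_simp
    linarith [he ▸ h2]
  rw [hid]
  nlinarith

lemma core (a b u : ℝ) (ha : 0 < a) (hb : 0 < b) (hu : 0 ≤ u) :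
    4 * a * b * sinh ((a + b) / 2 * u) ^ 2 ≤ (a + b) ^ 2 * (sinh (a * u) * sinh (b * u)) := by
  rcases le_total b a with h | h
  · exact core_aux a b u hb h hu
  · have := core_aux b a u ha h hu
    have e1 : (b + a) / 2 * u = (a + b) / 2 * u := by ring
    rw [e1] at this
    nlinarith [this]

lemma exp_sub_exp (A B : ℝ) : exp A - exp B = 2 * exp ((A + B) / 2) * sinh ((A - B) / 2) := by
  rw [Real.sinh_eq]
  have h1 : exp ((A + B) / 2) * exp ((A - B) / 2) = exp A := by
    rw [← Real.exp_add]; congr 1; ring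
  have h2 : exp ((A + B) / 2) * exp (-((A - B) / 2)) = exp B := by
    rw [← Real.exp_add]; congr 1; ring
  linear_combination h2 - h1

lemma main_aux (x y α β : ℝ) (hx : 0 < x) (hy : 0 < y) (hxy : x ≤ y)
    (hα : 0 < α) (hβ : 0 < β) :
    4 * α * β * (y ^ ((α + β) / 2) - x ^ ((α + β) / 2)) ^ 2 ≤
      (α + β) ^ 2 * (y ^ α - x ^ α) * (y ^ β - x ^ β) := by
  have hu0 : 0 ≤ (Real.log y - Real.log x) / 2 := by
    have := Real.log_le_log hx hxy
    linarith
  have key : ∀ γ : ℝ, y ^ γ - x ^ γ =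
      2 * exp (γ * ((Real.log x + Real.log y) / 2)) *
        sinh (γ * ((Real.log y - Real.log x) / 2)) := by
    intro γ
    rw [Real.rpow_def_of_pos hx, Real.rpow_def_of_pos hy,
      mul_comm (Real.log y) γ, mul_comm (Real.log x) γ,
      exp_sub_exp (γ * Real.log y) (γ * Real.log x)]
    congr 2 <;> ring
  rw [key, key, key]
  set Em := exp ((α + β) / 2 * ((Real.log x + Real.log y) / 2)) with hEm
  set Ea := exp (α * ((Real.log x + Real.log y) / 2)) with hEa
  set Eb := exp (β * ((Real.log x + Real.log y) / 2)) with hEb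
  have hexp : Ea * Eb = Em ^ 2 := by
    rw [hEa, hEb, hEm, sq, ← Real.exp_add, ← Real.exp_add]
    congr 1; ring
  have hcore := core α β ((Real.log y - Real.log x) / 2) hα hβ hu0
  have hEm2 : (0 : ℝ) ≤ 4 * Em ^ 2 := by positivity
  have h := mul_le_mul_of_nonneg_left hcore hEm2
  calc 4 * α * β * (2 * Em * sinh ((α + β) / 2 * ((Real.log y - Real.log x) / 2))) ^ 2
      = 4 * Em ^ 2 * (4 * α * β * sinh ((α + β) / 2 * ((Real.log y - Real.log x) / 2)) ^ 2) := by
        ring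
    _ ≤ 4 * Em ^ 2 * ((α + β) ^ 2 * (sinh (α * ((Real.log y - Real.log x) / 2)) *
          sinh (β * ((Real.log y - Real.log x) / 2)))) := h
    _ = (α + β) ^ 2 * (2 * Ea * sinh (α * ((Real.log y - Real.log x) / 2))) *
          (2 * Eb * sinh (β * ((Real.log y - Real.log x) / 2))) := by
        linear_combination (-4 * (α + β) ^ 2 * sinh (α * ((Real.log y - Real.log x) / 2)) *
          sinh (β * ((Real.log y - Real.log x) / 2))) * hexp

theorem power_mean_ineq (x y α β : ℝ) (hx : 0 < x) (hy : 0 < y)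
    (hα : 0 < α) (hβ : 0 < β) :
    4 * α * β * (y ^ ((α + β) / 2) - x ^ ((α + β) / 2)) ^ 2 ≤
      (α + β) ^ 2 * (y ^ α - x ^ α) * (y ^ β - x ^ β) := by
  rcases le_total x y with h | h
  · exact main_aux x y α β hx hy h hα hβ
  · have := main_aux y x α β hy hx h hα hβ
    have e1 : (y ^ ((α + β) / 2) - x ^ ((α + β) / 2)) ^ 2 =
        (x ^ ((α + β) / 2) - y ^ ((α + β) / 2)) ^ 2 := by ring
    have e2 : (α + β) ^ 2 * (y ^ α - x ^ α) * (y ^ β - x ^ β) =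
        (α + β) ^ 2 * (x ^ α - y ^ α) * (x ^ β - y ^ β) := by ring
    rw [e1, e2]
    exact this
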